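/- Let B be a Banach space with a dense subspace D that is itself a Banach space with ‖·‖_D ≥ ‖·‖_B. Let {U^{t,r}} be a strongly continuous backward propagator of bounded operators on B leaving D invariant, generated on D by a family {A_t} of bounded operators D → B depending strongly continuously on t. Let ξ_s (s ∈ [t,r]) be a weak-* continuous curve in B* with ξ_t = ξ satisfying d/ds (f, ξ_s) = (A_s f, ξ_s) for all f ∈ D and s ∈ [t,r]. Then for each f ∈ D the function g(s) = (U^{s,r} f, ξ_s) is constant on [t,r]; in particular (f, ξ_r) = (U^{t,r} f, ξ). -/

import Mathlib

open NormedSpace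

/-- basic duality, constancy lemma: if `U^{t,r}` is a strongly
continuous backward propagator on `B` with invariant dense domain `D` (embedded
via `ι`), generated on `D` by the strongly continuous family `A_t`, and `ξ_s`
is a weak-* continuous curve in `B*` solving `d/ds (f,ξ_s) = (A_s f, ξ_s)` for
`f ∈ D`, then `s ↦ (U^{s,r} f, ξ_s)` is constant on `[t,r]`; in particular
`(f, ξ_r) = (U^{t,r} f, ξ_t)`. -/
theorem dual_pairing_constant_along_propagator
    {D B : Type*} [NormedAddCommGroup D] [NormedSpace ℝ D]
    [NormedAddCommGroup B] [NormedSpace ℝ B] [CompleteSpace B]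
    (ι : D →L[ℝ] B) (hιinj : Function.Injective ι) (hιdense : DenseRange ι)
    (hιnorm : ∀ f : D, ‖ι f‖ ≤ ‖f‖)
    (t r : ℝ) (htr : t ≤ r)
    (U : ℝ → ℝ → B →L[ℝ] B) (UD : ℝ → ℝ → D →L[ℝ] D) (A : ℝ → D →L[ℝ] B)
    (hcompat : ∀ (u v : ℝ) (f : D), U u v (ι f) = ι (UD u v f))
    (hid : ∀ u : ℝ, U u u = ContinuousLinearMap.id ℝ B)
    (hchain : ∀ u v w : ℝ, u ≤ v → v ≤ w → (U u v).comp (U v w) = U u w)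
    (hUcont : ∀ b : B, Continuous fun p : ℝ × ℝ => U p.1 p.2 b)
    (hAcont : ∀ f : D, Continuous fun s : ℝ => A s f)
    -- generation of `U` by `A` on the invariant domain `D`:
    (hgen_fwd : ∀ (f : D), ∀ s ∈ Set.Icc t r,
      HasDerivWithinAt (fun u : ℝ => U t u (ι f)) (U t s (A s f)) (Set.Icc t r) s)
    (hgen_bwd : ∀ (f : D), ∀ s ∈ Set.Icc t r,
      HasDerivWithinAt (fun u : ℝ => U u r (ι f)) (-(A s (UD s r f))) (Set.Icc t r) s)
    -- a weak-* continuous solution of the dual Cauchy problem: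
    (ξ : ℝ → StrongDual ℝ B)
    (hξcont : ∀ b : B, ContinuousOn (fun s : ℝ => ξ s b) (Set.Icc t r))
    (hξeq : ∀ (f : D), ∀ s ∈ Set.Icc t r,
      HasDerivWithinAt (fun u : ℝ => ξ u (ι f)) (ξ s (A s f)) (Set.Icc t r) s) :
    (∀ (f : D), ∀ s ∈ Set.Icc t r, ξ s (ι (UD s r f)) = ξ t (ι (UD t r f))) ∧
    (∀ f : D, ξ r (ι f) = ξ t (U t r (ι f))) := by

  -- uniform bound on `ξ u` for `u ∈ [t,r]` via Banach–Steinhaus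
  obtain ⟨C, hC⟩ : ∃ C, ∀ u : Set.Icc t r, ‖ξ u‖ ≤ C := by
    apply banach_steinhaus
    intro b
    obtain ⟨M, hM⟩ := isCompact_Icc.exists_bound_of_continuousOn (hξcont b)
    exact ⟨M, fun u => hM u u.2⟩
  have hCb : ∀ u ∈ Set.Icc t r, ∀ x : B, ‖ξ u x‖ ≤ C * ‖x‖ := fun u hu x =>
    (ξ u).le_of_opNorm_le (hC ⟨u, hu⟩) x
  have key : ∀ (f : D), ∀ s ∈ Set.Icc t r, ξ s (ι (UD s r f)) = ξ t (ι (UD t r f)) := by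
    intro f
    set g : ℝ → ℝ := fun u => ξ u (U u r (ι f)) with hgdef
    have hg : ∀ s ∈ Set.Icc t r, HasDerivWithinAt g 0 (Set.Icc t r) s := by
      intro s hs
      set d : B := A s (UD s r f) with hd
      set b₀ : B := U s r (ι f) with hb0
      have h2 : HasDerivWithinAt (fun u => ξ u b₀) (ξ s d) (Set.Icc t r) s := by
        have := hξeq (UD s r f) s hs
        simpa [hb0, hd, hcompat] using this
      have hA2 := hasDerivWithinAt_iff_isLittleO.1 h2
      have hbwd := hasDerivWithinAt_iff_isLittleO.1 (hgen_bwd f s hs)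
      -- E u := U u r (ι f) - b₀ - (u - s) • (-d)
      have hT1 : (fun u : ℝ => ξ u (U u r (ι f) - b₀ - (u - s) • (-d)))
          =o[nhdsWithin s (Set.Icc t r)] fun u => u - s := by
        refine (Asymptotics.isBigO_iff.2 ⟨C, ?_⟩).trans_isLittleO hbwd
        filter_upwards [self_mem_nhdsWithin] with u hu
        exact hCb u hu _
      have hφ : Filter.Tendsto (fun u : ℝ => ξ s d - ξ u d)
          (nhdsWithin s (Set.Icc t r)) (nhds 0) := by
        have h := (hξcont d s hs).tendsto
        have := h.const_sub (ξ s d)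
        simpa using this
      have hT3 : (fun u : ℝ => (ξ s d - ξ u d) * (u - s))
          =o[nhdsWithin s (Set.Icc t r)] fun u => u - s := by
        have := ((Asymptotics.isLittleO_one_iff ℝ).2 hφ).mul_isBigO
          (Asymptotics.isBigO_refl (fun u : ℝ => u - s) (nhdsWithin s (Set.Icc t r)))
        simpa using this
      rw [hasDerivWithinAt_iff_isLittleO]
      have hsum := (hT1.add hT3).add hA2
      refine hsum.congr_left fun u => ?_
      simp only [map_sub, map_smul, map_neg, smul_eq_mul, hgdef, smul_zero]
      ring
    have hgc : ContinuousOn g (Set.Icc t r) := fun s hs => (hg s hs).continuousWithinAt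
    have hconst := constant_of_has_deriv_right_zero hgc (fun x hx =>
      (hg x (Set.Ico_subset_Icc_self hx)).mono_of_mem_nhdsWithin
        (Icc_mem_nhdsGE_of_mem hx))
    intro s hs
    have h1 := hconst s hs
    simpa [hgdef, hcompat] using h1
  refine ⟨key, fun f => ?_⟩
  have h := key f r ⟨htr, le_refl r⟩
  have hUDrr : UD r r f = f := hιinj (by rw [← hcompat, hid]; rfl)
  rw [hUDrr] at h
  rw [h, hcompat]
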